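/- For n ≥ 1, a topological space X is hereditarily (n+1)-irresolvable if and only if the scheme C_n is C-valid in X (interpreting □ as interior and ◇ as closure). -/

import Mathlib

/-- Modal formulas: variables, ⊤, ¬, ∧, □. -/
inductive Fml : Type
  | var : ℕ → Fml
  | top : Fml
  | neg : Fml → Fml
  | and : Fml → Fml → Fml
  | box : Fml → Fml
deriving DecidableEq

namespace Fml
/-- Material implication, defined from ¬ and ∧. -/
def imp (φ ψ : Fml) : Fml := .neg (.and φ (.neg ψ))
/-- Disjunction. -/
def or (φ ψ : Fml) : Fml := .neg (.and (.neg φ) (.neg ψ))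
/-- ◇φ := ¬□¬φ. -/
def dia (φ : Fml) : Fml := .neg (.box (.neg φ))
/-- □*φ := φ ∧ □φ. -/
def boxs (φ : Fml) : Fml := .and φ (.box φ)
/-- ◇*φ := φ ∨ ◇φ. -/
def dias (φ : Fml) : Fml := Fml.or φ (dia φ)
end Fml

/-- Kripke satisfaction. -/
def sat {W : Type} (R : W → W → Prop) (V : ℕ → Set W) : W → Fml → Prop
  | x, .var p => x ∈ V p
  | _, .top => True
  | x, .neg φ => ¬ sat R V x φ
  | x, .and φ ψ => sat R V x φ ∧ sat R V x ψ
  | x, .box φ => ∀ y, R x y → sat R V y φ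

/-- P_n(φ0; φ1,...,φn): P_0(φ0) = ◇φ0, P_n(φ0,φ1,...,φn) = ◇(φ1 ∧ P_{n-1}(φ0,φ2,...,φn)). -/
def Pfml (φ0 : Fml) : List Fml → Fml
  | [] => φ0.dia
  | ψ :: rest => (Fml.and ψ (Pfml φ0 rest)).dia

/-- Conjunction of ¬(φ ∧ ψ) for ψ in the list. -/
def conjNeg (φ : Fml) : List Fml → Fml
  | [] => .top
  | ψ :: rest => .and (.neg (.and φ ψ)) (conjNeg φ rest)

/-- D_n: pairwise disjointness conjunction ⋀_{i<j} ¬(φ_i ∧ φ_j). -/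
def Dfml : List Fml → Fml
  | [] => .top
  | φ :: rest => .and (conjNeg φ rest) (Dfml rest)

/-- The scheme C_n instance on φ0,φ1,...,φn (φs = [φ1,...,φn]). -/
def Cfml (φ0 : Fml) (φs : List Fml) : Fml :=
  ((Dfml (φ0 :: φs)).boxs).imp ((φ0.dia).imp ((Fml.and φ0 (Fml.neg (Pfml φ0 φs))).dia))

/-- The scheme C_n* instance: as C_n but with ◇* in the consequent. -/
def CfmlStar (φ0 : Fml) (φs : List Fml) : Fml :=
  ((Dfml (φ0 :: φs)).boxs).imp ((φ0.dia).imp ((Fml.and φ0 (Fml.neg (Pfml φ0 φs))).dias))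

/-- An ascending R-chain. -/
def AscChain {W : Type} (R : W → W → Prop) (x : ℕ → W) : Prop := ∀ m, R (x m) (x (m+1))

/-- A strictly ascending R-chain. -/
def StrictAscChain {W : Type} (R : W → W → Prop) (x : ℕ → W) : Prop :=
  AscChain R x ∧ ∀ m, ¬ R (x (m+1)) (x m)

/-- The R-cluster of x. -/
def cluster {W : Type} (R : W → W → Prop) (x : W) : Set W := {y | x = y ∨ (R x y ∧ R y x)}

/-- The frame has a cycle of length k (k ≥ 1): k distinct points x_0 R x_1 R ... R x_{k-1} R x_0. -/
def HasCycle {W : Type} (R : W → W → Prop) (k : ℕ) : Prop :=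
  1 ≤ k ∧ ∃ x : ℕ → W, (∀ i j, i < k → j < k → x i = x j → i = j) ∧
    ∀ i < k, R (x i) (x ((i+1) % k))

/-- Circumference at most n: every cycle has length ≤ n. -/
def CircumLE {W : Type} (R : W → W → Prop) (n : ℕ) : Prop := ∀ k, HasCycle R k → k ≤ n

/-- The frame (W,R) validates the scheme C_n. -/
def ValidatesCn {W : Type} (R : W → W → Prop) (n : ℕ) : Prop :=
  ∀ (V : ℕ → Set W) (x : W) (φ0 : Fml) (φs : List Fml), φs.length = n →
    sat R V x (Cfml φ0 φs)

/-- A Boolean valuation on formulas (box-formulas and variables as atoms). -/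
def BoolEval (w : Fml → Bool) : Prop :=
  w .top = true ∧ (∀ φ, w (.neg φ) = !w φ) ∧ (∀ φ ψ, w (.and φ ψ) = (w φ && w ψ))

/-- Propositional tautologies. -/
def Tautology (φ : Fml) : Prop := ∀ w, BoolEval w → w φ = true

/-- Theorems of the smallest normal modal logic containing the axiom set Ax. -/
inductive Prov (Ax : Set Fml) : Fml → Prop
  | taut {φ} : Tautology φ → Prov Ax φ
  | kax (φ ψ) : Prov Ax ((Fml.box (φ.imp ψ)).imp ((Fml.box φ).imp (Fml.box ψ)))
  | ax {φ} : φ ∈ Ax → Prov Ax φ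
  | mp {φ ψ} : Prov Ax (φ.imp ψ) → Prov Ax φ → Prov Ax ψ
  | nec {φ} : Prov Ax φ → Prov Ax (.box φ)

/-- All instances of the transitivity scheme 4. -/
def Ax4 : Set Fml := {χ | ∃ φ, χ = (Fml.box φ).imp (Fml.box (Fml.box φ))}

/-- Axioms of K4C_n: scheme 4 together with all instances of scheme C_n. -/
def AxK4C (n : ℕ) : Set Fml :=
  Ax4 ∪ {χ | ∃ (φ0 : Fml) (φs : List Fml), φs.length = n ∧ χ = Cfml φ0 φs}

/-- X is hereditarily m-irresolvable: no nonempty subspace has m pairwise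
disjoint subsets each dense in the subspace. -/
def HeredIrres (X : Type) [TopologicalSpace X] (m : ℕ) : Prop :=
  ∀ S : Set X, S.Nonempty →
    ¬ ∃ D : Fin m → Set X, (∀ i, D i ⊆ S) ∧ (∀ i j, i ≠ j → Disjoint (D i) (D j)) ∧
      ∀ i, S ⊆ closure (D i)

/-- C-semantics truth sets: □ is interior (hence ◇ is closure). -/
def csat {X : Type} [TopologicalSpace X] (V : ℕ → Set X) : Fml → Set X
  | .var p => V p
  | .top => Set.univ
  | .neg φ => (csat V φ)ᶜ
  | .and φ ψ => csat V φ ∩ csat V ψ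
  | .box φ => interior (csat V φ)

/-- The derived set: set of limit points of Y. -/
def dset {X : Type} [TopologicalSpace X] (Y : Set X) : Set X := {x | x ∈ closure (Y \ {x})}

/-- d-semantics truth sets: ◇ is the derived-set operator. -/
def dsat {X : Type} [TopologicalSpace X] (V : ℕ → Set X) : Fml → Set X
  | .var p => V p
  | .top => Set.univ
  | .neg φ => (dsat V φ)ᶜ
  | .and φ ψ => dsat V φ ∩ dsat V ψ
  | .box φ => (dset ((dsat V φ)ᶜ))ᶜ

/-- The Alexandroff topology of a frame: open sets are the R-up-sets. -/
def alexTop {W : Type} (R : W → W → Prop) : TopologicalSpace W where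
  IsOpen O := ∀ x ∈ O, ∀ y, R x y → y ∈ O
  isOpen_univ := by intro x _ y _; trivial
  isOpen_inter := by intro s t hs ht x hx y hR; exact ⟨hs x hx.1 y hR, ht x hx.2 y hR⟩
  isOpen_sUnion := by
    intro S hS x hx y hR
    obtain ⟨t, htS, hxt⟩ := hx
    exact ⟨t, htS, hS t htS x hxt y hR⟩


section StmtAux

open Set

variable {X : Type} [TopologicalSpace X] (V : ℕ → Set X)

lemma csat_dia (φ : Fml) : csat V φ.dia = closure (csat V φ) := by
  rw [closure_eq_compl_interior_compl]; rfl

lemma csat_imp (φ ψ : Fml) : csat V (φ.imp ψ) = (csat V φ ∩ (csat V ψ)ᶜ)ᶜ := rfl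

lemma mem_csat_imp {x : X} {φ ψ : Fml} :
    x ∈ csat V (φ.imp ψ) ↔ (x ∈ csat V φ → x ∈ csat V ψ) := by
  rw [csat_imp]
  simp only [Set.mem_compl_iff, Set.mem_inter_iff]
  tauto

lemma csat_boxs (φ : Fml) : csat V φ.boxs = csat V φ ∩ interior (csat V φ) := rfl

lemma csat_Pfml_nil (φ0 : Fml) : csat V (Pfml φ0 []) = closure (csat V φ0) :=
  csat_dia V φ0

lemma csat_Pfml_cons (φ0 ψ : Fml) (l : List Fml) :
    csat V (Pfml φ0 (ψ :: l)) = closure (csat V ψ ∩ csat V (Pfml φ0 l)) := by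
  rw [Pfml, csat_dia]; rfl

lemma isClosed_Pfml (φ0 : Fml) (l : List Fml) : IsClosed (csat V (Pfml φ0 l)) := by
  cases l <;> simp only [csat_Pfml_nil, csat_Pfml_cons] <;> exact isClosed_closure

lemma conjNeg_spec {y : X} {φ : Fml} {l : List Fml} :
    y ∈ csat V (conjNeg φ l) ↔ ∀ ψ ∈ l, ¬(y ∈ csat V φ ∧ y ∈ csat V ψ) := by
  induction l with
  | nil => simp [conjNeg, csat]
  | cons ψ l ih =>
    simp only [conjNeg, csat, Set.mem_inter_iff, Set.mem_compl_iff, ih, List.mem_cons]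
    constructor
    · rintro ⟨h1, h2⟩ χ (rfl | hχ)
      · exact h1
      · exact h2 χ hχ
    · intro h
      exact ⟨h ψ (Or.inl rfl), fun χ hχ => h χ (Or.inr hχ)⟩

lemma Dfml_spec {y : X} {L : List Fml} :
    y ∈ csat V (Dfml L) ↔ L.Pairwise (fun φ ψ => ¬(y ∈ csat V φ ∧ y ∈ csat V ψ)) := by
  induction L with
  | nil => simp [Dfml, csat]
  | cons φ L ih =>
    simp only [Dfml, csat, Set.mem_inter_iff, ih, List.pairwise_cons, conjNeg_spec]

lemma mem_csat_Cfml {x : X} {φ0 : Fml} {φs : List Fml} :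
    x ∈ csat V (Cfml φ0 φs) ↔
      ((x ∈ csat V (Dfml (φ0 :: φs)) ∧ x ∈ interior (csat V (Dfml (φ0 :: φs)))) →
        x ∈ closure (csat V φ0) →
        x ∈ closure (csat V φ0 ∩ (csat V (Pfml φ0 φs))ᶜ)) := by
  have h1 : csat V ((Fml.and φ0 (Fml.neg (Pfml φ0 φs))).dia)
      = closure (csat V φ0 ∩ (csat V (Pfml φ0 φs))ᶜ) := by
    rw [csat_dia]; rfl
  have h2 : csat V (φ0.dia) = closure (csat V φ0) := csat_dia V φ0
  rw [Cfml, mem_csat_imp]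
  simp only [mem_csat_imp, h1, h2, csat_boxs, Set.mem_inter_iff]

/-- The resolving family built from a failing instance. -/
def allD {X : Type} [TopologicalSpace X] (V : ℕ → Set X) (U : Set X) (φ0 : Fml) :
    List Fml → List (Set X)
  | [] => [U ∩ csat V φ0]
  | ψ :: l => (U ∩ csat V ψ ∩ csat V (Pfml φ0 l)) :: allD V U φ0 l

lemma length_allD (U : Set X) (φ0 : Fml) (l : List Fml) :
    (allD V U φ0 l).length = l.length + 1 := by
  induction l with
  | nil => rfl
  | cons ψ l ih => simp [allD, ih]

lemma lemA {U : Set X} (hU : IsOpen U) (φ0 : Fml) (l : List Fml) :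
    U ∩ csat V (Pfml φ0 l) ⊆ closure (U ∩ csat V φ0) := by
  induction l with
  | nil => rw [csat_Pfml_nil]; exact hU.inter_closure
  | cons ψ l ih =>
    rw [csat_Pfml_cons]
    calc U ∩ closure (csat V ψ ∩ csat V (Pfml φ0 l))
        ⊆ closure (U ∩ (csat V ψ ∩ csat V (Pfml φ0 l))) := hU.inter_closure
      _ ⊆ closure (U ∩ csat V (Pfml φ0 l)) :=
          closure_mono (fun y hy => ⟨hy.1, hy.2.2⟩)
      _ ⊆ closure (closure (U ∩ csat V φ0)) := closure_mono ih
      _ = closure (U ∩ csat V φ0) := closure_closure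

lemma lemB {U : Set X} (hU : IsOpen U) (φ0 : Fml) (l : List Fml)
    (hsub : U ∩ csat V φ0 ⊆ csat V (Pfml φ0 l)) :
    ∀ A ∈ allD V U φ0 l, closure A = closure (U ∩ csat V φ0) := by
  induction l with
  | nil =>
    intro A hA
    simp only [allD, List.mem_singleton] at hA
    rw [hA]
  | cons ψ l ih =>
    have hsub' : U ∩ csat V φ0 ⊆ csat V (Pfml φ0 l) := by
      refine hsub.trans ?_
      rw [csat_Pfml_cons]
      exact closure_minimal (fun y hy => hy.2) (isClosed_Pfml V φ0 l)
    intro A hA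
    simp only [allD, List.mem_cons] at hA
    rcases hA with rfl | hA
    · apply subset_antisymm
      · calc closure (U ∩ csat V ψ ∩ csat V (Pfml φ0 l))
            ⊆ closure (U ∩ csat V (Pfml φ0 l)) :=
              closure_mono (fun y hy => ⟨hy.1.1, hy.2⟩)
          _ ⊆ closure (closure (U ∩ csat V φ0)) := closure_mono (lemA V hU φ0 l)
          _ = closure (U ∩ csat V φ0) := closure_closure
      · refine closure_minimal ?_ isClosed_closure
        intro y hy
        have hy2 : y ∈ U ∩ closure (csat V ψ ∩ csat V (Pfml φ0 l)) := by
          refine ⟨hy.1, ?_⟩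
          have := hsub hy
          rwa [csat_Pfml_cons] at this
        rw [Set.inter_assoc]
        exact hU.inter_closure hy2
    · exact ih hsub' A hA

lemma lemC (U : Set X) (φ0 : Fml) (l : List Fml) :
    ∀ k (h : k < (allD V U φ0 l).length) (h' : k < (l ++ [φ0]).length),
      (allD V U φ0 l).get ⟨k, h⟩ ⊆ U ∩ csat V ((l ++ [φ0]).get ⟨k, h'⟩) := by
  induction l with
  | nil =>
    intro k h h'
    match k with
    | 0 => exact fun y hy => hy
    | k + 1 => exact absurd h (by simp [allD])
  | cons ψ l ih =>
    intro k h h'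
    match k with
    | 0 => exact fun y hy => ⟨hy.1.1, hy.1.2⟩
    | k + 1 =>
      have h1 : k < (allD V U φ0 l).length := by
        simpa [allD] using Nat.lt_of_succ_lt_succ h
      have h2 : k < (l ++ [φ0]).length := by
        simpa using Nat.lt_of_succ_lt_succ h'
      exact ih k h1 h2

lemma lemF (φ0 : Fml) (S : Set X) (l : List Fml) (h0 : S ⊆ closure (csat V φ0))
    (hl : ∀ ψ ∈ l, csat V ψ ⊆ S ∧ S ⊆ closure (csat V ψ)) :
    S ⊆ csat V (Pfml φ0 l) := by
  induction l with
  | nil => rw [csat_Pfml_nil]; exact h0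
  | cons ψ l ih =>
    rw [csat_Pfml_cons]
    obtain ⟨hψS, hSψ⟩ := hl ψ List.mem_cons_self
    have ihl : S ⊆ csat V (Pfml φ0 l) := ih (fun χ hχ => hl χ (List.mem_cons_of_mem ψ hχ))
    calc S ⊆ closure (csat V ψ) := hSψ
      _ ⊆ closure (csat V ψ ∩ csat V (Pfml φ0 l)) :=
        closure_mono (fun y hy => ⟨hy, ihl (hψS hy)⟩)

end StmtAux

/-- for n ≥ 1, X is hereditarily (n+1)-irresolvable iff the scheme
C_n is C-valid in X. -/
theorem stmt14 {X : Type} [TopologicalSpace X] (n : ℕ) (hn : 1 ≤ n) :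
    HeredIrres X (n+1) ↔
      ∀ (V : ℕ → Set X) (φ0 : Fml) (φs : List Fml), φs.length = n →
        csat V (Cfml φ0 φs) = Set.univ := by
  classical
  constructor
  · -- HeredIrres → C_n valid
    intro hHI V φ0 φs hlen
    by_contra hne
    obtain ⟨x, hx⟩ : ∃ x, x ∉ csat V (Cfml φ0 φs) := by
      by_contra h
      push_neg at h
      exact hne (Set.eq_univ_of_forall h)
    rw [mem_csat_Cfml] at hx
    push_neg at hx
    obtain ⟨⟨hxD, hxiD⟩, hx0, hxP⟩ := hx
    set U : Set X := interior (csat V (Dfml (φ0 :: φs))) ∩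
      (closure (csat V φ0 ∩ (csat V (Pfml φ0 φs))ᶜ))ᶜ with hUdef
    have hU : IsOpen U := isOpen_interior.inter isClosed_closure.isOpen_compl
    have hxU : x ∈ U := ⟨hxiD, hxP⟩
    have hUD : ∀ y ∈ U, y ∈ csat V (Dfml (φ0 :: φs)) := fun y hy => interior_subset hy.1
    have hUP : U ∩ csat V φ0 ⊆ csat V (Pfml φ0 φs) := by
      rintro y ⟨hyU, hy0⟩
      by_contra hyP
      exact hyU.2 (subset_closure ⟨hy0, hyP⟩)
    have hne0 : (U ∩ csat V φ0).Nonempty := mem_closure_iff.mp hx0 U hU hxU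
    have hlenD : (allD V U φ0 φs).length = n + 1 := by rw [length_allD, hlen]
    set Dk : Fin (n+1) → Set X :=
      fun i => (allD V U φ0 φs).get (Fin.cast hlenD.symm i) with hDk
    have hclos : ∀ i : Fin (n+1), closure (Dk i) = closure (U ∩ csat V φ0) :=
      fun i => lemB V hU φ0 φs hUP _ (List.get_mem _ _)
    have hgetlen : (φs ++ [φ0]).length = n + 1 := by simp [hlen]
    have hsubF : ∀ i : Fin (n+1),
        Dk i ⊆ U ∩ csat V ((φs ++ [φ0]).get (Fin.cast hgetlen.symm i)) :=
      fun i => lemC V U φ0 φs i.val _ _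
    have htrans : ∀ p : Fin (n+1), ∃ q : ℕ, (q = if p.val < n then p.val + 1 else 0) ∧
        ∃ hq : q < (φ0 :: φs).length,
        (φs ++ [φ0]).get (Fin.cast hgetlen.symm p) = (φ0 :: φs).get ⟨q, hq⟩ := by
      intro p
      by_cases h : p.val < n
      · refine ⟨p.val + 1, by simp [h], by simp [hlen]; omega, ?_⟩
        have hp : p.val < φs.length := by omega
        simp [List.get_eq_getElem, List.getElem_append_left, hp]
      · have hpn : p.val = n := by omega
        refine ⟨0, by simp [h], by simp, ?_⟩
        have hp : ¬ p.val < φs.length := by omega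
        simp [List.get_eq_getElem, List.getElem_append_right, hp, hlen, hpn]
    refine hHI (closure (U ∩ csat V φ0)) (hne0.mono subset_closure)
      ⟨Dk, fun i => ?_, fun i j hij => ?_, fun i => ?_⟩
    · calc Dk i ⊆ closure (Dk i) := subset_closure
        _ = closure (U ∩ csat V φ0) := hclos i
    · rw [Set.disjoint_left]
      intro u hui huj
      obtain ⟨hu1, hu2⟩ := hsubF i hui
      obtain ⟨_, hu3⟩ := hsubF j huj
      obtain ⟨qi, hqi, hqi', hei⟩ := htrans i
      obtain ⟨qj, hqj, hqj', hej⟩ := htrans j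
      rw [hei] at hu2
      rw [hej] at hu3
      have hqne : qi ≠ qj := by
        have : i.val ≠ j.val := fun h => hij (Fin.ext h)
        have hi2 : i.val < n + 1 := i.isLt
        have hj2 : j.val < n + 1 := j.isLt
        subst hqi; subst hqj
        split_ifs <;> omega
      have hD := (Dfml_spec V).mp (hUD u hu1)
      rw [List.pairwise_iff_getElem] at hD
      have hL : ∀ a b (ha : a < (φ0 :: φs).length) (hb : b < (φ0 :: φs).length),
          a ≠ b → ¬(u ∈ csat V ((φ0 :: φs).get ⟨a, ha⟩) ∧
            u ∈ csat V ((φ0 :: φs).get ⟨b, hb⟩)) := by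
        intro a b ha hb hab
        rcases Nat.lt_or_ge a b with h | h
        · exact hD a b ha hb h
        · have hba : b < a := by omega
          intro hc
          exact hD b a hb ha hba ⟨hc.2, hc.1⟩
      exact hL qi qj hqi' hqj' hqne ⟨hu2, hu3⟩
    · exact le_of_eq (hclos i).symm
  · -- C_n valid → HeredIrres
    intro hvalid S hSne
    rintro ⟨D, hDS, hdisj, hdense⟩
    set V : ℕ → Set X := fun m => if h : m < n + 1 then D ⟨m, h⟩ else ∅ with hV
    have hVi : ∀ i : Fin (n+1), csat V (.var i.val) = D i := by
      intro i
      show V i.val = D i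
      simp only [hV, i.isLt, dif_pos]
    set φs : List Fml := (List.range n).map (fun k => Fml.var (k+1)) with hφs
    have hlen : φs.length = n := by simp [hφs]
    obtain ⟨x, hxS⟩ := hSne
    have hx : x ∈ csat V (Cfml (.var 0) φs) := by
      rw [hvalid V (.var 0) φs hlen]; trivial
    rw [mem_csat_Cfml] at hx
    have hD0 : csat V (Fml.var 0) = D 0 := by
      have := hVi 0
      simpa using this
    have hDuniv : csat V (Dfml (.var 0 :: φs)) = Set.univ := by
      apply Set.eq_univ_of_forall
      intro y
      rw [Dfml_spec]
      have hvar : ∀ a b : Fin (n+1), a ≠ b →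
          ¬(y ∈ csat V (.var a.val) ∧ y ∈ csat V (.var b.val)) := by
        intro a b hab hc
        rw [hVi a] at hc
        rw [hVi b] at hc
        exact Set.disjoint_left.mp (hdisj a b hab) hc.1 hc.2
      rw [List.pairwise_cons]
      constructor
      · intro ψ hψ
        rw [hφs] at hψ
        simp only [List.mem_map, List.mem_range] at hψ
        obtain ⟨k, hk, rfl⟩ := hψ
        have := hvar 0 ⟨k+1, by omega⟩ (by
          intro h
          have := congrArg Fin.val h
          simp at this)
        simpa using this
      · rw [hφs, List.pairwise_map]
        refine List.Pairwise.imp_of_mem ?_ List.pairwise_lt_range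
        intro a b ha hb hab
        rw [List.mem_range] at ha hb
        have := hvar ⟨a+1, by omega⟩ ⟨b+1, by omega⟩ (by
          intro h
          rw [Fin.mk.injEq] at h
          omega)
        simpa using this
    have h1 : x ∈ csat V (Dfml (.var 0 :: φs)) ∧
        x ∈ interior (csat V (Dfml (.var 0 :: φs))) := by
      rw [hDuniv]; simp
    have h2 : x ∈ closure (csat V (.var 0)) := by
      rw [hD0]; exact hdense 0 hxS
    have h3 := hx h1 h2
    have hP : S ⊆ csat V (Pfml (.var 0) φs) := by
      apply lemF
      · rw [hD0]; exact hdense 0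
      · intro ψ hψ
        rw [hφs] at hψ
        simp only [List.mem_map, List.mem_range] at hψ
        obtain ⟨k, hk, rfl⟩ := hψ
        have hk1 : csat V (Fml.var (k+1)) = D ⟨k+1, by omega⟩ := hVi ⟨k+1, by omega⟩
        rw [hk1]
        exact ⟨hDS _, hdense _⟩
    have hemp : csat V (Fml.var 0) ∩ (csat V (Pfml (.var 0) φs))ᶜ = ∅ := by
      rw [hD0]
      ext y
      simp only [Set.mem_inter_iff, Set.mem_compl_iff, Set.mem_empty_iff_false, iff_false,
        not_and, not_not]
      intro hy
      exact hP (hDS 0 hy)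
    rw [hemp, closure_empty] at h3
    exact h3
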